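/- Let N ≥ 2 and let a₁,…,a_N be positive integers. Define φ : ℤ^N → ℤ^N as multiplication by the N×N integer matrix C with C[i][i] = a_i, C[i][i+1] = -a_{i+1} for i = 1,…,N-1, C[N][1] = -a₁, C[N][N] = a_N, and all other entries zero. For k = 1,…,N-1 set r_k = gcd(lcm(a₁,…,a_k), a_{k+1}). Then the cokernel ℤ^N / im(φ) is isomorphic as an abelian group to ℤ ⊕ ℤ/r₁ ⊕ ℤ/r₂ ⊕ ⋯ ⊕ ℤ/r_{N-1}. -/

import Mathlib

open AddSubgroup Matrix

noncomputable def quotProdEquiv {A B : Type*} [AddCommGroup A] [AddCommGroup B]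
    (H : AddSubgroup A) (K : AddSubgroup B) :
    ((A × B) ⧸ (H.prod K)) ≃+ (A ⧸ H) × (B ⧸ K) := by
  have hker : ((QuotientAddGroup.mk' H).prodMap (QuotientAddGroup.mk' K)).ker = H.prod K := by
    ext ⟨x, y⟩
    simp [AddMonoidHom.mem_ker, AddSubgroup.mem_prod, Prod.ext_iff,
      QuotientAddGroup.eq_zero_iff]
  refine (QuotientAddGroup.quotientAddEquivOfEq hker.symm).trans ?_
  exact QuotientAddGroup.quotientKerEquivOfSurjective _
    (Function.Surjective.prodMap (QuotientAddGroup.mk'_surjective H) (QuotientAddGroup.mk'_surjective K))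

theorem lemA {G : Type*} [AddCommGroup G] (h : G) (T : Set G) (A B : ℕ) (hA : 0 < A) (hB : 0 < B) :
    Nonempty (((ℤ × G) ⧸ AddSubgroup.closure
        ({((A : ℤ), (0 : G)), ((B : ℤ), (B : ℤ) • h)} ∪ (Prod.mk (0 : ℤ) '' T))) ≃+
      (ZMod (Nat.gcd A B) × (G ⧸ AddSubgroup.closure ({((Nat.lcm A B : ℤ)) • h} ∪ T)))) := by
  have hdnat : 0 < Nat.gcd A B := Nat.gcd_pos_of_pos_left B hA
  obtain ⟨A', f1⟩ : ∃ A' : ℤ, A' * (Nat.gcd A B : ℤ) = A :=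
    ⟨((A / Nat.gcd A B : ℕ) : ℤ), by exact_mod_cast Nat.div_mul_cancel (Nat.gcd_dvd_left A B)⟩
  obtain ⟨B', f2⟩ : ∃ B' : ℤ, B' * (Nat.gcd A B : ℤ) = B :=
    ⟨((B / Nat.gcd A B : ℕ) : ℤ), by exact_mod_cast Nat.div_mul_cancel (Nat.gcd_dvd_right A B)⟩
  obtain ⟨u, v, f5⟩ : ∃ u v : ℤ, u * B + v * A = (Nat.gcd A B : ℤ) :=
    ⟨Nat.gcdB A B, Nat.gcdA A B, by linear_combination (Nat.gcd_eq_gcd_ab A B).symm⟩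
  have e3 : (Nat.gcd A B : ℤ) * (Nat.lcm A B : ℤ) = (A : ℤ) * B := by
    exact_mod_cast Nat.gcd_mul_lcm A B
  set d : ℤ := (Nat.gcd A B : ℤ) with hd
  set L : ℤ := (Nat.lcm A B : ℤ) with hL
  have hd0 : d ≠ 0 := by rw [hd]; exact_mod_cast hdnat.ne'
  have f3 : A' * (B : ℤ) = L := by
    apply mul_right_cancel₀ hd0; linear_combination (B : ℤ) * f1 - e3
  have f4 : B' * (A : ℤ) = L := by
    apply mul_right_cancel₀ hd0; linear_combination (A : ℤ) * f2 - e3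
  have f6 : B' * u + A' * v = 1 := by
    apply mul_right_cancel₀ hd0; linear_combination u * f2 + v * f1 + f5
  have f7 : u * (B : ℤ) = d * (1 - v * A') := by linear_combination f5 + v * f1
  set S₀ : Set (ℤ × G) :=
    {((A : ℤ), (0 : G)), ((B : ℤ), (B : ℤ) • h)} ∪ (Prod.mk (0 : ℤ) '' T) with hS₀
  set S₁ : Set (ℤ × G) :=
    {(d, (u * (B : ℤ)) • h), ((0 : ℤ), L • h)} ∪ (Prod.mk (0 : ℤ) '' T) with hS₁
  set S₂ : Set (ℤ × G) :=
    {(d, (0 : G)), ((0 : ℤ), L • h)} ∪ (Prod.mk (0 : ℤ) '' T) with hS₂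
  -- generators
  have g10 : ((A : ℤ), (0 : G)) ∈ closure S₀ :=
    subset_closure (Set.mem_union_left _ (Set.mem_insert _ _))
  have g20 : ((B : ℤ), (B : ℤ) • h) ∈ closure S₀ :=
    subset_closure (Set.mem_union_left _ (Set.mem_insert_of_mem _ rfl))
  have g11 : ((d, (u * (B : ℤ)) • h) : ℤ × G) ∈ closure S₁ :=
    subset_closure (Set.mem_union_left _ (Set.mem_insert _ _))
  have g21 : (((0 : ℤ), L • h) : ℤ × G) ∈ closure S₁ :=
    subset_closure (Set.mem_union_left _ (Set.mem_insert_of_mem _ rfl))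
  have step1 : closure S₀ = closure S₁ := by
    apply le_antisymm <;> rw [closure_le]
    · rintro x ((rfl | rfl) | hx)
      · have key : ((A : ℤ), (0 : G)) = A' • ((d, (u * (B : ℤ)) • h) : ℤ × G) +
            (-u) • (((0 : ℤ), L • h) : ℤ × G) := by
          rw [Prod.smul_mk, Prod.smul_mk, Prod.mk_add_mk]
          refine Prod.ext ?_ ?_
          · simp only [smul_eq_mul, smul_zero]; linear_combination -f1
          · rw [smul_smul, smul_smul, ← add_smul]
            rw [show A' * (u * (B : ℤ)) + (-u) * L = 0 by linear_combination u * f3]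
            simp
        rw [key]; exact (closure S₁).add_mem (zsmul_mem g11 A') (zsmul_mem g21 (-u))
      · have key : ((B : ℤ), (B : ℤ) • h) = B' • ((d, (u * (B : ℤ)) • h) : ℤ × G) +
            v • (((0 : ℤ), L • h) : ℤ × G) := by
          rw [Prod.smul_mk, Prod.smul_mk, Prod.mk_add_mk]
          refine Prod.ext ?_ ?_
          · simp only [smul_eq_mul, smul_zero]; linear_combination -f2
          · rw [smul_smul, smul_smul, ← add_smul]
            rw [show B' * (u * (B : ℤ)) + v * L = (B : ℤ) by
              linear_combination (B : ℤ) * f6 - v * f3]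
        rw [key]; exact (closure S₁).add_mem (zsmul_mem g11 B') (zsmul_mem g21 v)
      · exact subset_closure (Set.mem_union_right _ hx)
    · rintro x ((rfl | rfl) | hx)
      · have key : ((d, (u * (B : ℤ)) • h) : ℤ × G) = u • (((B : ℤ), (B : ℤ) • h) : ℤ × G) +
            v • (((A : ℤ), (0 : G)) : ℤ × G) := by
          rw [Prod.smul_mk, Prod.smul_mk, Prod.mk_add_mk]
          refine Prod.ext ?_ ?_
          · simp only [smul_eq_mul]; linear_combination -f5
          · rw [smul_smul, smul_zero, add_zero]
        rw [key]; exact (closure S₀).add_mem (zsmul_mem g20 u) (zsmul_mem g10 v)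
      · have key : (((0 : ℤ), L • h) : ℤ × G) = A' • (((B : ℤ), (B : ℤ) • h) : ℤ × G) +
            (-B') • (((A : ℤ), (0 : G)) : ℤ × G) := by
          rw [Prod.smul_mk, Prod.smul_mk, Prod.mk_add_mk]
          refine Prod.ext ?_ ?_
          · simp only [smul_eq_mul, smul_zero]; linear_combination f4 - f3
          · rw [smul_smul, smul_zero, add_zero, f3]
        rw [key]; exact (closure S₀).add_mem (zsmul_mem g20 A') (zsmul_mem g10 (-B'))
      · exact subset_closure (Set.mem_union_right _ hx)
  -- the shearing automorphism
  set c : ℤ := 1 - v * A' with hc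
  set ψ : ℤ × G ≃+ ℤ × G :=
  { toFun := fun p => (p.1, p.2 - (p.1 * c) • h)
    invFun := fun p => (p.1, p.2 + (p.1 * c) • h)
    left_inv := fun p => by simp
    right_inv := fun p => by simp
    map_add' := fun p q => by
      refine Prod.ext rfl ?_
      simp only [Prod.fst_add, Prod.snd_add, add_mul, add_smul]
      abel } with hψ
  have himg : (ψ : ℤ × G → ℤ × G) '' S₁ = S₂ := by
    rw [hS₁, hS₂, Set.image_union, Set.image_insert_eq, Set.image_singleton]
    congr 1
    · congr 1
      · show ((d, (u * (B : ℤ)) • h - (d * c) • h) : ℤ × G) = (d, (0 : G))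
        refine Prod.ext rfl ?_
        rw [← sub_smul, show u * (B : ℤ) - d * c = 0 by linear_combination f7]
        simp
      · show ({((0 : ℤ), L • h - ((0 : ℤ) * c) • h)} : Set (ℤ × G)) = {((0 : ℤ), L • h)}
        simp
    · rw [← Set.image_comp]
      refine Set.image_congr' (fun t => ?_)
      show ((0 : ℤ), t - ((0 : ℤ) * c) • h) = ((0 : ℤ), t)
      simp
  have step2 : (closure S₁).map ψ.toAddMonoidHom = closure S₂ := by
    rw [AddMonoidHom.map_closure]
    try exact congrArg AddSubgroup.closure himg
  have step3 : closure S₂ = (zmultiples d).prod (closure ({L • h} ∪ T)) := by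
    apply le_antisymm
    · rw [closure_le]
      rintro x ((rfl | rfl) | ⟨t, ht, rfl⟩)
      · exact AddSubgroup.mem_prod.2 ⟨mem_zmultiples d, zero_mem _⟩
      · exact AddSubgroup.mem_prod.2 ⟨zero_mem _,
          subset_closure (Set.mem_union_left _ rfl)⟩
      · exact AddSubgroup.mem_prod.2 ⟨zero_mem _,
          subset_closure (Set.mem_union_right _ ht)⟩
    · rintro ⟨x, y⟩ hxy
      rw [AddSubgroup.mem_prod] at hxy
      obtain ⟨hx, hy⟩ := hxy
      obtain ⟨k, rfl⟩ := mem_zmultiples_iff.1 hx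
      have h1 : ((k • d, (0 : G)) : ℤ × G) ∈ closure S₂ := by
        have := zsmul_mem (subset_closure
          (Set.mem_union_left _ (Set.mem_insert _ _) : ((d, (0:G)) : ℤ × G) ∈ S₂)) k
        simpa using this
      have h2 : (((0 : ℤ), y) : ℤ × G) ∈ closure S₂ := by
        have hmap : (closure ({L • h} ∪ T)).map (AddMonoidHom.inr ℤ G) ≤ closure S₂ := by
          rw [AddMonoidHom.map_closure]
          apply AddSubgroup.closure_mono
          rintro z ⟨w, (rfl | hw), rfl⟩
          · exact Set.mem_union_left _ (Set.mem_insert_of_mem _ rfl)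
          · exact Set.mem_union_right _ ⟨w, hw, rfl⟩
        exact hmap ⟨y, hy, rfl⟩
      simpa using add_mem h1 h2
  -- assemble
  refine ⟨((((QuotientAddGroup.quotientAddEquivOfEq step1).trans
      (QuotientAddGroup.congr _ _ ψ step2)).trans
      (QuotientAddGroup.quotientAddEquivOfEq step3)).trans
      (quotProdEquiv _ _)).trans
      (AddEquiv.prodCongr (Int.quotientZMultiplesNatEquivZMod (Nat.gcd A B)) (AddEquiv.refl _))⟩


def zmodCongr {n n' : ℕ} (h : n = n') : ZMod n ≃+ ZMod n' := by subst h; exact AddEquiv.refl _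

def piFinSuccAddEquiv (m : ℕ) : (Fin (m + 1) → ℤ) ≃+ ℤ × (Fin m → ℤ) :=
  { toFun := fun f => (f 0, fun k => f k.succ)
    invFun := fun p => Fin.cons p.1 p.2
    left_inv := fun f => by
      funext k
      cases k using Fin.cases <;> simp
    right_inv := fun p => by
      refine Prod.ext rfl ?_
      funext k; simp
    map_add' := fun f g => rfl }

def finConsAddEquiv {m : ℕ} (M : Fin (m + 1) → Type*) [∀ k, AddCommGroup (M k)] :
    (M 0 × ∀ k : Fin m, M k.succ) ≃+ ∀ k, M k :=
  { toFun := fun p => Fin.cons p.1 p.2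
    invFun := fun f => (f 0, fun k => f k.succ)
    left_inv := fun p => by
      refine Prod.ext rfl ?_
      funext k; simp
    right_inv := fun f => by
      funext k
      cases k using Fin.cases <;> simp
    map_add' := fun p q => by
      funext k
      cases k using Fin.cases <;> simp }

lemma lcm_shift (a : ℕ → ℕ) (k : ℕ) :
    (Finset.range (k + 1)).lcm a = Nat.lcm (a 0) ((Finset.range k).lcm (fun i => a (i + 1))) := by
  induction k with
  | zero => simp [Nat.lcm]
  | succ k ih =>
      rw [Finset.range_add_one, Finset.lcm_insert, ih, Finset.range_add_one, Finset.lcm_insert]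
      show Nat.lcm _ _ = _
      show _ = Nat.lcm _ (Nat.lcm _ _)
      rw [← Nat.lcm_assoc, Nat.lcm_comm (a (k + 1)) (a 0), Nat.lcm_assoc]

def gens (m b : ℕ) (a : ℕ → ℕ) : Set (Fin m → ℤ) :=
  {fun _ => (b : ℤ)} ∪ Set.range (fun j : Fin m => fun i => if i = j then (a (j : ℕ) : ℤ) else 0)

lemma range_fin_succ' {β : Type*} {m : ℕ} (g : Fin (m + 1) → β) :
    Set.range g = insert (g 0) (Set.range (fun k : Fin m => g k.succ)) := by
  ext x
  constructor
  · rintro ⟨j, rfl⟩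
    cases j using Fin.cases with
    | zero => exact Or.inl rfl
    | succ k => exact Or.inr ⟨k, rfl⟩
  · rintro (rfl | ⟨k, rfl⟩)
    · exact ⟨0, rfl⟩
    · exact ⟨_, rfl⟩


theorem lemB (m : ℕ) : ∀ (b : ℕ), 0 < b → ∀ (a : ℕ → ℕ), (∀ i < m, 0 < a i) →
    Nonempty (((Fin m → ℤ) ⧸ AddSubgroup.closure (gens m b a)) ≃+
      ∀ k : Fin m, ZMod (Nat.gcd (Nat.lcm b ((Finset.range (k : ℕ)).lcm a)) (a (k : ℕ)))) := by
  induction m with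
  | zero =>
      intro b hb a ha
      haveI h1 : Subsingleton (Fin 0 → ℤ) := ⟨fun f g => funext fun i => i.elim0⟩
      haveI h2 : Subsingleton ((Fin 0 → ℤ) ⧸ AddSubgroup.closure (gens 0 b a)) :=
        ⟨fun x y => by
          induction x using QuotientAddGroup.induction_on
          induction y using QuotientAddGroup.induction_on
          exact congrArg _ (Subsingleton.elim _ _)⟩
      haveI h3 : Subsingleton (∀ k : Fin 0,
          ZMod (Nat.gcd (Nat.lcm b ((Finset.range (k : ℕ)).lcm a)) (a (k : ℕ)))) :=
        ⟨fun f g => funext fun k => k.elim0⟩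
      exact ⟨AddEquiv.ofBijective (0 : _ →+ _)
        ⟨fun x y _ => Subsingleton.elim x y, fun y => ⟨0, Subsingleton.elim _ _⟩⟩⟩
  | succ m IH =>
      intro b hb a ha
      set e := piFinSuccAddEquiv m with he
      set ones : Fin m → ℤ := (fun _ => (1 : ℤ)) with hones
      set T : Set (Fin m → ℤ) :=
        Set.range (fun k : Fin m => fun i => if i = k then (a ((k : ℕ) + 1) : ℤ) else 0) with hT
      have e_ones : e (fun _ => (b : ℤ)) = ((b : ℤ), (b : ℤ) • ones) := by
        refine Prod.ext rfl ?_
        funext i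
        show (b : ℤ) = (b : ℤ) • ones i
        simp [hones]
      have e_single0 : e (fun i => if i = (0 : Fin (m + 1)) then (a ((0 : Fin (m+1)) : ℕ) : ℤ) else 0)
          = ((a 0 : ℤ), (0 : Fin m → ℤ)) := by
        refine Prod.ext ?_ ?_
        · show (if (0 : Fin (m+1)) = (0 : Fin (m + 1)) then (a ((0 : Fin (m+1)) : ℕ) : ℤ) else 0) = _
          simp
        · funext k
          show (if k.succ = (0 : Fin (m + 1)) then (a ((0 : Fin (m+1)) : ℕ) : ℤ) else 0) = 0
          simp [Fin.succ_ne_zero]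
      have e_singleS : ∀ k : Fin m,
          e (fun i => if i = k.succ then (a ((k.succ : Fin (m+1)) : ℕ) : ℤ) else 0)
          = ((0 : ℤ), fun i => if i = k then (a ((k : ℕ) + 1) : ℤ) else 0) := by
        intro k
        refine Prod.ext ?_ ?_
        · show (if (0 : Fin (m+1)) = k.succ then (a ((k.succ : Fin (m+1)) : ℕ) : ℤ) else 0) = 0
          simp [(Fin.succ_ne_zero k).symm, eq_comm]
        · funext i
          show (if i.succ = k.succ then (a ((k.succ : Fin (m+1)) : ℕ) : ℤ) else 0) = _
          simp [Fin.succ_inj, Fin.val_succ]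
      have himg : (⇑e) '' gens (m + 1) b a =
          {((a 0 : ℤ), (0 : Fin m → ℤ)), ((b : ℤ), (b : ℤ) • ones)} ∪ Prod.mk (0 : ℤ) '' T := by
        rw [gens, Set.image_union, Set.image_singleton, e_ones, ← Set.range_comp]
        have : Set.range ((⇑e) ∘ fun j : Fin (m+1) => fun i => if i = j then (a (j : ℕ) : ℤ) else 0)
            = insert ((a 0 : ℤ), (0 : Fin m → ℤ))
                (Set.range (fun k : Fin m => ((0:ℤ), fun i => if i = k then (a ((k : ℕ) + 1) : ℤ) else 0))) := by
          rw [range_fin_succ' ((⇑e) ∘ fun j : Fin (m+1) => fun i => if i = j then (a (j : ℕ) : ℤ) else 0)]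
          exact congrArg₂ insert e_single0 (congrArg Set.range (funext fun k => e_singleS k))
        rw [this, hT, ← Set.range_comp]
        ext p
        simp only [Set.mem_union, Set.mem_insert_iff, Set.mem_singleton_iff, Set.mem_range,
          Function.comp]
        tauto
      have step : (AddSubgroup.closure (gens (m + 1) b a)).map e.toAddMonoidHom =
          AddSubgroup.closure ({((a 0 : ℤ), (0 : Fin m → ℤ)), ((b : ℤ), (b : ℤ) • ones)} ∪ Prod.mk (0:ℤ) '' T) := by
        rw [AddMonoidHom.map_closure]
        exact congrArg _ himg
      obtain ⟨E2⟩ := lemA ones T (a 0) b (ha 0 (by omega)) hb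
      have hlcmpos : 0 < Nat.lcm (a 0) b :=
        Nat.pos_of_ne_zero (Nat.lcm_ne_zero (ha 0 (by omega)).ne' hb.ne')
      have hset : ({((Nat.lcm (a 0) b : ℤ)) • ones} ∪ T) = gens m (Nat.lcm (a 0) b) (fun i => a (i + 1)) := by
        have hfun : ((Nat.lcm (a 0) b : ℤ)) • ones = (fun _ : Fin m => ((Nat.lcm (a 0) b : ℕ) : ℤ)) := by
          funext i; simp [hones]
        rw [gens, hT, hfun]
      obtain ⟨E3⟩ := IH (Nat.lcm (a 0) b) hlcmpos (fun i => a (i + 1)) (fun i hi => ha (i + 1) (by omega))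
      have h0 : Nat.gcd (a 0) b
          = Nat.gcd (Nat.lcm b ((Finset.range ((0 : Fin (m+1)) : ℕ)).lcm a)) (a ((0 : Fin (m+1)) : ℕ)) := by
        have h00 : ((0 : Fin (m+1)) : ℕ) = 0 := rfl
        rw [h00, Finset.range_zero, Finset.lcm_empty, Nat.lcm_one_right, Nat.gcd_comm]
      have hk : ∀ k : Fin m,
          Nat.gcd (Nat.lcm (Nat.lcm (a 0) b) ((Finset.range (k : ℕ)).lcm (fun i => a (i + 1)))) (a ((k : ℕ) + 1))
          = Nat.gcd (Nat.lcm b ((Finset.range ((k.succ : Fin (m+1)) : ℕ)).lcm a)) (a ((k.succ : Fin (m+1)) : ℕ)) := by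
        intro k
        have hsv : ((k.succ : Fin (m+1)) : ℕ) = (k : ℕ) + 1 := rfl
        rw [hsv, lcm_shift a (k : ℕ)]
        congr 1
        show _ = Nat.lcm b (Nat.lcm (a 0) _)
        rw [← Nat.lcm_assoc, Nat.lcm_comm b (a 0), Nat.lcm_assoc]
      refine ⟨?_⟩
      refine (QuotientAddGroup.congr _ _ e step).trans ?_
      refine E2.trans ?_
      refine (AddEquiv.prodCongr (zmodCongr h0)
        (((QuotientAddGroup.quotientAddEquivOfEq (congrArg AddSubgroup.closure hset)).trans E3).trans
          (AddEquiv.piCongrRight fun k => zmodCongr (hk k)))).trans ?_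
      exact finConsAddEquiv (fun k : Fin (m + 1) =>
        ZMod (Nat.gcd (Nat.lcm b ((Finset.range (k : ℕ)).lcm a)) (a (k : ℕ))))


def pad {m : ℕ} (v : Fin (m + 2) → ℤ) (i : ℕ) : ℤ :=
  if h : i < m + 2 then v ⟨i, h⟩ else 0

lemma pad_add {m : ℕ} (v w : Fin (m + 2) → ℤ) (i : ℕ) :
    pad (v + w) i = pad v i + pad w i := by
  unfold pad; split <;> simp

def Wequiv (m : ℕ) : (Fin (m + 2) → ℤ) ≃+ ℤ × (Fin (m + 1) → ℤ) :=
  { toFun := fun v => (∑ i ∈ Finset.range (m + 2), pad v i,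
      fun k => ∑ i ∈ Finset.range ((k : ℕ) + 1), pad v i)
    invFun := fun p => fun i =>
      if h : (i : ℕ) = 0 then p.2 ⟨0, by omega⟩
      else if h2 : (i : ℕ) < m + 1 then p.2 ⟨(i : ℕ), h2⟩ - p.2 ⟨(i : ℕ) - 1, by omega⟩
      else p.1 - p.2 ⟨m, by omega⟩
    left_inv := by
      intro v
      funext i
      by_cases h : (i : ℕ) = 0
      · simp only [dif_pos h]
        rw [Finset.sum_range_one]
        show pad v 0 = v i
        rw [pad, dif_pos (by omega)]
        congr 1
        exact (Fin.ext h.symm : (⟨0, by omega⟩ : Fin (m+2)) = i).symm ▸ rfl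
      · by_cases h2 : (i : ℕ) < m + 1
        · simp only [dif_neg h, dif_pos h2]
          obtain ⟨t, ht⟩ : ∃ t, (i : ℕ) = t + 1 := ⟨(i : ℕ) - 1, by omega⟩
          simp only [ht, Nat.add_sub_cancel]
          rw [Finset.sum_range_succ, add_sub_cancel_left]
          rw [pad, dif_pos (by omega)]
          congr 1
          exact Fin.ext ht.symm
        · simp only [dif_neg h, dif_neg h2]
          have : (i : ℕ) = m + 1 := by have := i.isLt; omega
          rw [Finset.sum_range_succ, add_sub_cancel_left]
          rw [pad, dif_pos (by omega)]
          congr 1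
          exact Fin.ext this.symm
    right_inv := by
      intro p
      obtain ⟨S, z⟩ := p
      dsimp only
      have hv : ∀ n : ℕ, ∀ hn : n ≤ m, ∑ i ∈ Finset.range (n + 1),
          pad (fun i : Fin (m+2) =>
            if h : (i : ℕ) = 0 then z ⟨0, by omega⟩
            else if h2 : (i : ℕ) < m + 1 then z ⟨(i : ℕ), h2⟩ - z ⟨(i : ℕ) - 1, by omega⟩
            else S - z ⟨m, by omega⟩) i = z ⟨n, by omega⟩ := by
        intro n
        induction n with
        | zero =>
            intro hn
            rw [Finset.sum_range_one, pad, dif_pos (by omega)]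
            show dite _ _ _ = _
            rw [dif_pos rfl]
        | succ n ih =>
            intro hn
            rw [Finset.sum_range_succ, ih (by omega), pad, dif_pos (by omega)]
            show z _ + dite _ _ _ = _
            rw [dif_neg (by simp), dif_pos (by simp; omega)]
            simp only [Nat.add_sub_cancel]
            abel
      refine Prod.ext ?_ ?_
      · show (∑ i ∈ Finset.range (m + 2), _) = S
        rw [Finset.sum_range_succ, hv m (le_refl m)]
        rw [pad, dif_pos (by omega)]
        show z _ + dite _ _ _ = S
        rw [dif_neg (by simp), dif_neg (by simp)]
        abel
      · funext k
        show (∑ i ∈ Finset.range ((k : ℕ) + 1), _) = z k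
        rw [hv (k : ℕ) (by omega)]
    map_add' := fun v w => by
      refine Prod.ext ?_ ?_
      · show (∑ i ∈ Finset.range (m + 2), pad (v + w) i) = _
        simp only [pad_add, Finset.sum_add_distrib]
        rfl
      · funext k
        show (∑ i ∈ Finset.range _, pad (v + w) i) = _
        simp only [pad_add, Finset.sum_add_distrib]
        rfl }

lemma pad_single {m : ℕ} (t : Fin (m + 2)) (c : ℤ) :
    pad (fun i => if i = t then c else 0) = fun i : ℕ => if i = (t : ℕ) then c else 0 := by
  funext i
  rw [pad]
  split
  · next h => simp [Fin.ext_iff]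
  · next h =>
      exact (if_neg (show ¬ i = (t : ℕ) by have := t.isLt; omega)).symm

lemma sum_single (n t : ℕ) (c : ℤ) :
    ∑ i ∈ Finset.range n, (if i = t then c else 0) = if t < n then c else 0 := by
  simp [Finset.sum_ite_eq', Finset.mem_range]

lemma Wsingle {m : ℕ} (t : Fin (m + 2)) (c : ℤ) :
    Wequiv m (fun i => if i = t then c else 0)
      = (c, fun k : Fin (m + 1) => if (t : ℕ) ≤ (k : ℕ) then c else 0) := by
  refine Prod.ext ?_ ?_
  · show (∑ i ∈ Finset.range (m + 2), pad _ i) = c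
    rw [pad_single, sum_single, if_pos t.isLt]
  · funext k
    show (∑ i ∈ Finset.range ((k : ℕ) + 1), pad _ i) = _
    rw [pad_single, sum_single]
    congr 1
    simp [Nat.lt_succ_iff]

lemma range_fin_succ'' {β : Type*} {m : ℕ} (g : Fin (m + 1) → β) :
    Set.range g = insert (g 0) (Set.range (fun k : Fin m => g k.succ)) := by
  ext x
  constructor
  · rintro ⟨j, rfl⟩
    cases j using Fin.cases with
    | zero => exact Or.inl rfl
    | succ k => exact Or.inr ⟨k, rfl⟩
  · rintro (rfl | ⟨k, rfl⟩)
    · exact ⟨0, rfl⟩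
    · exact ⟨_, rfl⟩

lemma Wcol0 {m : ℕ} (a : ℕ → ℕ) :
    Wequiv m ((fun i : Fin (m+2) => if i = (0 : Fin (m+2)) then (a ((0 : Fin (m+2)) : ℕ) : ℤ) else 0)
        + (fun i : Fin (m+2) => if i = (0 : Fin (m+2)) - 1 then -(a ((0 : Fin (m+2)) : ℕ) : ℤ) else 0))
      = ((0 : ℤ), fun _ : Fin (m + 1) => (a 0 : ℤ)) := by
  rw [map_add, Wsingle, Wsingle]
  have h1 : (((0 : Fin (m+2)) - 1 : Fin (m+2)) : ℕ) = m + 1 := by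
    rw [Fin.coe_sub_one, if_pos rfl]
  have h0 : (((0 : Fin (m+2))) : ℕ) = 0 := rfl
  refine Prod.ext (by simp) ?_
  funext k
  show (if ((0:Fin (m+2)) : ℕ) ≤ (k : ℕ) then ((a ((0 : Fin (m+2)) : ℕ) : ℤ)) else 0)
      + (if (((0 : Fin (m+2)) - 1 : Fin (m+2)) : ℕ) ≤ (k : ℕ) then -(a ((0 : Fin (m+2)) : ℕ) : ℤ) else 0)
      = (a 0 : ℤ)
  rw [h0, h1, if_pos (Nat.zero_le _), if_neg (by have := k.isLt; omega), add_zero]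

lemma WcolS {m : ℕ} (a : ℕ → ℕ) (t : Fin (m + 1)) :
    Wequiv m ((fun i : Fin (m+2) => if i = t.succ then (a ((t.succ : Fin (m+2)) : ℕ) : ℤ) else 0)
        + (fun i : Fin (m+2) => if i = t.succ - 1 then -(a ((t.succ : Fin (m+2)) : ℕ) : ℤ) else 0))
      = ((0 : ℤ), fun k : Fin (m + 1) => if k = t then -(a ((t : ℕ) + 1) : ℤ) else 0) := by
  rw [map_add, Wsingle, Wsingle]
  have hsv : ((t.succ : Fin (m+2)) : ℕ) = (t : ℕ) + 1 := rfl
  have h1 : ((t.succ - 1 : Fin (m+2)) : ℕ) = (t : ℕ) := by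
    rw [Fin.coe_sub_one, if_neg (Fin.succ_ne_zero t), hsv]; omega
  refine Prod.ext (by simp) ?_
  funext k
  show (if ((t.succ : Fin (m+2)) : ℕ) ≤ (k : ℕ) then ((a ((t.succ : Fin (m+2)) : ℕ) : ℤ)) else 0)
      + (if ((t.succ - 1 : Fin (m+2)) : ℕ) ≤ (k : ℕ) then -(a ((t.succ : Fin (m+2)) : ℕ) : ℤ) else 0)
      = if k = t then -(a ((t : ℕ) + 1) : ℤ) else 0
  rw [hsv, h1]
  rcases Nat.lt_trichotomy (k : ℕ) (t : ℕ) with h | h | h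
  · rw [if_neg (by omega), if_neg (by omega), if_neg (by rw [Fin.ext_iff]; omega), add_zero]
  · rw [if_neg (by omega), if_pos (by omega), if_pos (Fin.ext h), zero_add]
  · rw [if_pos (by omega), if_pos (by omega), if_neg (by rw [Fin.ext_iff]; omega)]
    simp

def quotSubEquiv {M : Type*} [AddCommGroup M] (p : Submodule ℤ M) :
    (M ⧸ p) ≃+ M ⧸ p.toAddSubgroup :=
  { Equiv.cast rfl with
    map_add' := fun x y => by
      induction x using Quotient.inductionOn'
      induction y using Quotient.inductionOn'
      rfl }

lemma closure_zero_prod {H : Type*} [AddCommGroup H] (S : Set H) :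
    AddSubgroup.closure (Prod.mk (0 : ℤ) '' S) = AddSubgroup.prod ⊥ (AddSubgroup.closure S) := by
  apply le_antisymm
  · rw [closure_le]
    rintro p ⟨t, ht, rfl⟩
    exact AddSubgroup.mem_prod.2 ⟨by simp, subset_closure ht⟩
  · rintro ⟨x, y⟩ hp
    rw [AddSubgroup.mem_prod] at hp
    obtain ⟨hx, hy⟩ := hp
    have hx0 : x = 0 := by simpa using hx
    subst hx0
    have hmap : (AddSubgroup.closure S).map (AddMonoidHom.inr ℤ H)
        ≤ AddSubgroup.closure (Prod.mk (0 : ℤ) '' S) := by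
      rw [AddMonoidHom.map_closure]
      apply AddSubgroup.closure_mono
      rintro z ⟨w, hw, rfl⟩
      exact ⟨w, hw, rfl⟩
    exact hmap ⟨y, hy, rfl⟩

lemma closure_neg_range {α ι : Type*} [AddCommGroup α] (s : Set α) (g h : ι → α)
    (hgh : ∀ i, g i = - h i) :
    AddSubgroup.closure (s ∪ Set.range g) = AddSubgroup.closure (s ∪ Set.range h) := by
  apply le_antisymm <;> rw [closure_le] <;> rintro x (hx | ⟨i, rfl⟩)
  · exact subset_closure (Or.inl hx)
  · rw [hgh i]
    exact neg_mem (subset_closure (Or.inr ⟨i, rfl⟩))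
  · exact subset_closure (Or.inl hx)
  · rw [show h i = -(g i) by rw [hgh i, neg_neg]]
    exact neg_mem (subset_closure (Or.inr ⟨i, rfl⟩))


/-- cokernel of the circulant-type integer matrix
`C i i = a i`, `C i (i+1) = -a (i+1)` (cyclically), is
`ℤ ⊕ ℤ/r₁ ⊕ ⋯ ⊕ ℤ/r_{N-1}` with `r_k = gcd(lcm(a₁,…,a_k), a_{k+1})`. -/
theorem stmt_0 (N : ℕ) (hN : 2 ≤ N) (a : ℕ → ℕ) (ha : ∀ i < N, 0 < a i) :
    Nonempty
      (((Fin N → ℤ) ⧸ LinearMap.range (Matrix.mulVecLin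
          (Matrix.of fun i j : Fin N =>
            if j = i then (a i : ℤ) else if j = i + ⟨1, by omega⟩ then -(a j : ℤ) else 0))) ≃+
        (ℤ × ∀ k : Fin (N - 1),
          ZMod (Nat.gcd ((Finset.range ((k : ℕ) + 1)).lcm a) (a ((k : ℕ) + 1))))) := by
  obtain ⟨m, rfl⟩ : ∃ m, N = m + 2 := ⟨N - 2, by omega⟩
  set negG : Set (Fin (m+1) → ℤ) :=
    {(fun _ : Fin (m+1) => ((a 0 : ℕ) : ℤ))} ∪
      Set.range (fun t : Fin (m+1) => fun k =>
        if k = t then -((a ((t : ℕ) + 1) : ℕ) : ℤ) else 0) with hnegG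
  have h10 : (1 : Fin (m+2)) ≠ 0 := by
    rw [Fin.ne_iff_vne]
    simp [Fin.val_one]
  have hcolfun : (Matrix.of fun i j : Fin (m+2) =>
        if j = i then (a i : ℤ) else if j = i + ⟨1, by omega⟩ then -(a j : ℤ) else 0)ᵀ
      = fun j : Fin (m+2) =>
        ((fun i => if i = j then (a (j : ℕ) : ℤ) else 0)
          + (fun i => if i = j - 1 then -(a (j : ℕ) : ℤ) else 0)) := by
    have hone : (⟨1, by omega⟩ : Fin (m+2)) = 1 := Fin.ext (by simp [Fin.val_one])
    funext j i
    simp only [Matrix.transpose_apply, Matrix.of_apply, Pi.add_apply, hone]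
    by_cases h1 : j = i
    · rw [if_pos h1, if_pos h1.symm,
        if_neg (fun heq => h10 (by rw [h1] at heq; exact sub_eq_self.mp heq.symm)),
        add_zero, h1]
    · by_cases h2 : j = i + 1
      · rw [if_neg h1, if_pos h2, if_neg (fun hij => h1 hij.symm),
          if_pos (by rw [h2, add_sub_cancel_right]), zero_add]
      · rw [if_neg h1, if_neg h2, if_neg (fun hij => h1 hij.symm),
          if_neg (fun heq => h2 (by rw [heq, sub_add_cancel])), add_zero]
  have heq1 : (LinearMap.range (Matrix.mulVecLin
        (Matrix.of fun i j : Fin (m+2) =>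
          if j = i then (a i : ℤ) else if j = i + ⟨1, by omega⟩ then -(a j : ℤ) else 0))).toAddSubgroup
      = AddSubgroup.closure (Set.range (fun j : Fin (m+2) =>
          ((fun i => if i = j then (a (j : ℕ) : ℤ) else 0)
            + (fun i => if i = j - 1 then -(a (j : ℕ) : ℤ) else 0)))) := by
    rw [Matrix.range_mulVecLin, Submodule.span_int_eq_addSubgroupClosure, Matrix.col, hcolfun]
  have himage : (⇑(Wequiv m)) '' (Set.range (fun j : Fin (m+2) =>
          ((fun i => if i = j then (a (j : ℕ) : ℤ) else 0)
            + (fun i => if i = j - 1 then -(a (j : ℕ) : ℤ) else 0))))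
      = Prod.mk (0 : ℤ) '' negG := by
    rw [← Set.range_comp, range_fin_succ'', hnegG, Set.image_union, Set.image_singleton,
      ← Set.range_comp, Set.singleton_union]
    exact congrArg₂ insert (Wcol0 a) (congrArg Set.range (funext fun t => WcolS a t))
  have step : (AddSubgroup.closure (Set.range (fun j : Fin (m+2) =>
          ((fun i => if i = j then (a (j : ℕ) : ℤ) else 0)
            + (fun i => if i = j - 1 then -(a (j : ℕ) : ℤ) else 0))))).map (Wequiv m).toAddMonoidHom
      = AddSubgroup.closure (Prod.mk (0 : ℤ) '' negG) := by
    rw [AddMonoidHom.map_closure]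
    exact congrArg _ himage
  have hsign : AddSubgroup.closure negG
      = AddSubgroup.closure (gens (m+1) (a 0) (fun i => a (i+1))) := by
    rw [hnegG, gens]
    apply closure_neg_range
    intro t
    funext k
    by_cases hk : k = t <;> simp [hk]
  obtain ⟨E⟩ := lemB (m+1) (a 0) (ha 0 (by omega)) (fun i => a (i+1)) (fun i hi => ha (i+1) (by omega))
  refine ⟨?_⟩
  refine ((quotSubEquiv _).trans (QuotientAddGroup.quotientAddEquivOfEq heq1)).trans ?_
  refine (QuotientAddGroup.congr _ _ (Wequiv m) step).trans ?_
  refine (QuotientAddGroup.quotientAddEquivOfEq (closure_zero_prod negG)).trans ?_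
  refine (quotProdEquiv _ _).trans ?_
  refine AddEquiv.prodCongr QuotientAddGroup.quotientBot ?_
  refine (QuotientAddGroup.quotientAddEquivOfEq hsign).trans ?_
  refine E.trans ?_
  refine AddEquiv.piCongrRight fun k => zmodCongr ?_
  rw [lcm_shift a (k : ℕ)]
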